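/- Let V be a commutative unital quantale, let f : (X,a) → (Y,b) be a fully faithful V-functor (a(x,x') = b(f(x),f(x')) for all x,x'), and let φ : X → V be a V-functor into (V,⊸) (i.e. φ(x) ⊗ a(x,x') ≤ φ(x') for all x,x'). Then the map ψ : Y → V defined by ψ(y) = ⋁_{x∈X} φ(x) ⊗ b(f(x),y) is a V-functor (Y,b) → (V,⊸) satisfying ψ(f(x)) = φ(x) for all x ∈ X. In particular, the V-category (V,⊸) is injective with respect to fully faithful V-functors. -/

import Mathlib

lemma quantale_aux {V : Type*} [CommMonoid V] [CompleteLattice V] [IsQuantale V]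
    {X Y : Type*}
    (b : Y → Y → V) (hb1 : ∀ y, (1 : V) ≤ b y y)
    (hb2 : ∀ x y z, b x y * b y z ≤ b x z)
    (f : X → Y)
    (φ : X → V) (hφ : ∀ x x', φ x * b (f x) (f x') ≤ φ x') :
    (∀ y y', (⨆ x : X, φ x * b (f x) y) * b y y' ≤ ⨆ x : X, φ x * b (f x) y') ∧
      (∀ x₀ : X, (⨆ x : X, φ x * b (f x) (f x₀)) = φ x₀) := by
  constructor
  · intro y y'
    rw [Quantale.iSup_mul_distrib]
    refine iSup_le fun x => ?_
    refine le_trans ?_ (le_iSup (fun x => φ x * b (f x) y') x)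
    rw [mul_assoc]
    exact mul_le_mul_right (hb2 _ _ _) _
  · intro x₀
    apply le_antisymm
    · exact iSup_le fun x => hφ x x₀
    · calc φ x₀ = φ x₀ * 1 := (mul_one _).symm
        _ ≤ φ x₀ * b (f x₀) (f x₀) := mul_le_mul_right (hb1 _) _
        _ ≤ _ := le_iSup (fun x => φ x * b (f x) (f x₀)) x₀

/-- if `f : (X,a) → (Y,b)` is fully faithful and `φ : X → V` is a V-functor
into `(V,⊸)`, then `ψ(y) = ⋁_x φ x ⊗ b (f x) y` is a V-functor `(Y,b) → (V,⊸)` with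
`ψ ∘ f = φ`; in particular `(V,⊸)` is injective w.r.t. fully faithful V-functors. -/
theorem stmt7 {V : Type*} [CommMonoid V] [CompleteLattice V] [IsQuantale V]
    {X Y : Type*}
    (a : X → X → V) (ha1 : ∀ x, (1 : V) ≤ a x x)
    (ha2 : ∀ x y z, a x y * a y z ≤ a x z)
    (b : Y → Y → V) (hb1 : ∀ y, (1 : V) ≤ b y y)
    (hb2 : ∀ x y z, b x y * b y z ≤ b x z)
    (f : X → Y) (hff : ∀ x x', a x x' = b (f x) (f x'))
    (φ : X → V) (hφ : ∀ x x', φ x * a x x' ≤ φ x') :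
    ((∀ y y', (⨆ x : X, φ x * b (f x) y) * b y y' ≤ ⨆ x : X, φ x * b (f x) y') ∧
      (∀ x₀ : X, (⨆ x : X, φ x * b (f x) (f x₀)) = φ x₀)) ∧
    (∀ φ' : X → V, (∀ x x', φ' x * a x x' ≤ φ' x') →
      ∃ ψ' : Y → V, (∀ y y', ψ' y * b y y' ≤ ψ' y') ∧ ∀ x, ψ' (f x) = φ' x) := by
  constructor
  · exact quantale_aux b hb1 hb2 f φ (fun x x' => by rw [← hff]; exact hφ x x')
  · intro φ' hφ'
    obtain ⟨h1, h2⟩ := quantale_aux b hb1 hb2 f φ' (fun x x' => by rw [← hff]; exact hφ' x x')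
    exact ⟨fun y => ⨆ x, φ' x * b (f x) y, h1, h2⟩
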